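/- For real numbers λ₁, λ₂ with |λ₁| < 1, |λ₂| < 1 and λ₁ ≠ λ₂, integers s₁, s₂, and setting S = |s₁ + s₂|, the limit as n → ∞ of (1/n) ∑_{i₁=1}^{n} ∑_{i₂=1}^{n} λ₁^{|i₁-i₂+s₁|} λ₂^{|i₂-i₁+s₂|} equals λ₁^{S+1}(1-λ₂²)/((λ₁-λ₂)(1-λ₁λ₂)) + λ₂^{S+1}(1-λ₁²)/((λ₂-λ₁)(1-λ₂λ₁)). -/

import Mathlib

open Filter Finset

private lemma aux_geom_int' (r : ℝ) (hr : |r| < 1) :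
    Summable (fun k : ℤ => |r| ^ k.natAbs) := by
  have h := summable_geometric_of_lt_one (abs_nonneg r) hr
  apply Summable.of_nat_of_neg
  · simpa using h
  · simpa using h

private lemma aux_summable_abs' (l1 l2 : ℝ) (h1 : |l1| < 1) (h2 : |l2| < 1) (s1 s2 : ℤ) :
    Summable (fun k : ℤ => |l1 ^ (k + s1).natAbs * l2 ^ (s2 - k).natAbs|) := by
  have hb : Summable (fun k : ℤ => |l1| ^ (k + s1).natAbs) := by
    have := (aux_geom_int' l1 h1).comp_injective (add_left_injective s1)
    simpa [Function.comp_def] using this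
  apply Summable.of_nonneg_of_le (fun k => abs_nonneg _) _ hb
  intro k
  rw [abs_mul, abs_pow, abs_pow]
  calc |l1| ^ (k + s1).natAbs * |l2| ^ (s2 - k).natAbs
      ≤ |l1| ^ (k + s1).natAbs * 1 := by
        apply mul_le_mul_of_nonneg_left (pow_le_one₀ (abs_nonneg _) h2.le)
          (by positivity)
    _ = _ := mul_one _

set_option linter.unreachableTactic false in
set_option linter.unusedTactic false in
-- convergence part
private lemma aux_conv (l1 l2 : ℝ) (h1 : |l1| < 1) (h2 : |l2| < 1) (s1 s2 : ℤ) :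
    Filter.Tendsto
      (fun n : ℕ => (1 / (n : ℝ)) *
        ∑ i₁ ∈ Finset.Icc 1 n, ∑ i₂ ∈ Finset.Icc 1 n,
          l1 ^ ((i₁ : ℤ) - (i₂ : ℤ) + s1).natAbs * l2 ^ ((i₂ : ℤ) - (i₁ : ℤ) + s2).natAbs)
      Filter.atTop
      (nhds (∑' k : ℤ, l1 ^ (k + s1).natAbs * l2 ^ (s2 - k).natAbs)) := by
  set F : ℤ → ℝ := fun k => l1 ^ (k + s1).natAbs * l2 ^ (s2 - k).natAbs with hFdef
  have hKsum : Summable (fun k : ℤ => |F k|) := aux_summable_abs' l1 l2 h1 h2 s1 s2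
  have hFsum : Summable F := hKsum.of_abs
  set T : ℝ := ∑' k, F k with hTdef
  set tail : ℕ → ℝ := fun m => ∑' x : {k : ℤ // k ∉ Finset.Icc (-(m:ℤ)) (m:ℤ)}, |F x| with htail
  have tail_nonneg : ∀ m, 0 ≤ tail m := fun m => tsum_nonneg fun x => abs_nonneg _
  have tail_tendsto : Tendsto tail atTop (nhds 0) := by
    have hmono : Tendsto (fun m : ℕ => Finset.Icc (-(m:ℤ)) (m:ℤ)) atTop atTop := by
      apply tendsto_atTop_finset_of_monotone
      · intro a b hab
        apply Finset.Icc_subset_Icc <;> simp <;> omega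
      · intro x
        exact ⟨x.natAbs, by simp only [Finset.mem_Icc]; omega⟩
    exact (tendsto_tsum_compl_atTop_zero (fun k : ℤ => |F k|)).comp hmono
  -- row reindex
  have row_eq : ∀ n i₂ : ℕ, 1 ≤ i₂ → i₂ ≤ n →
      (∑ i₁ ∈ Finset.Icc 1 n,
        l1 ^ ((i₁ : ℤ) - (i₂ : ℤ) + s1).natAbs * l2 ^ ((i₂ : ℤ) - (i₁ : ℤ) + s2).natAbs)
      = ∑ j ∈ Finset.Icc (1 - (i₂:ℤ)) ((n:ℤ) - i₂), F j := by
    intro n i₂ hi1 hi2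
    refine Finset.sum_nbij' (fun i₁ => (i₁ : ℤ) - i₂) (fun j => (j + i₂).toNat) ?_ ?_ ?_ ?_ ?_
    · intro a ha
      simp only [Finset.mem_Icc] at *
      omega
    · intro a ha
      simp only [Finset.mem_Icc] at *
      omega
    · intro a ha
      omega
    · intro a ha
      simp only [Finset.mem_Icc] at ha
      omega
    · intro a ha
      have : (s2 : ℤ) - ((a:ℤ) - i₂) = (i₂:ℤ) - a + s2 := by ring
      simp only [hFdef, this]
  -- row bound
  have row_bound : ∀ n i₂ : ℕ, 1 ≤ i₂ → i₂ ≤ n →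
      |(∑ j ∈ Finset.Icc (1 - (i₂:ℤ)) ((n:ℤ) - i₂), F j) - T|
        ≤ tail (i₂ - 1) + tail (n - i₂) := by
    intro n i₂ hi1 hi2
    set m : ℕ := min (i₂ - 1) (n - i₂) with hm
    have hm1 : m ≤ i₂ - 1 := min_le_left _ _
    have hm2 : m ≤ n - i₂ := min_le_right _ _
    have key : |(∑ j ∈ Finset.Icc (1 - (i₂:ℤ)) ((n:ℤ) - i₂), F j) - T|
        = |∑' x : {k : ℤ // k ∉ Finset.Icc (1 - (i₂:ℤ)) ((n:ℤ) - i₂)}, F x| := by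
      have hcompl := Summable.sum_add_tsum_subtype_compl hFsum (Finset.Icc (1 - (i₂:ℤ)) ((n:ℤ) - i₂))
      have : (∑ j ∈ Finset.Icc (1 - (i₂:ℤ)) ((n:ℤ) - i₂), F j) - T
          = -∑' x : {k : ℤ // k ∉ Finset.Icc (1 - (i₂:ℤ)) ((n:ℤ) - i₂)}, F x := by
        rw [hTdef, ← hcompl]; ring
      rw [this, abs_neg]
    rw [key]
    have step1 : |∑' x : {k : ℤ // k ∉ Finset.Icc (1 - (i₂:ℤ)) ((n:ℤ) - i₂)}, F x|
        ≤ ∑' x : {k : ℤ // k ∉ Finset.Icc (1 - (i₂:ℤ)) ((n:ℤ) - i₂)}, |F x| := by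
      have := norm_tsum_le_tsum_norm (f := fun x : {k : ℤ // k ∉ Finset.Icc (1 - (i₂:ℤ)) ((n:ℤ) - i₂)} => F x)
        (hKsum.subtype _)
      simpa [Real.norm_eq_abs] using this
    have step2 : (∑' x : {k : ℤ // k ∉ Finset.Icc (1 - (i₂:ℤ)) ((n:ℤ) - i₂)}, |F x|)
        ≤ tail m := by
      apply Summable.tsum_le_tsum_of_inj
        (fun x => (⟨x.1, by
          have hx := x.2
          simp only [Finset.mem_Icc] at *
          omega⟩ : {k : ℤ // k ∉ Finset.Icc (-(m:ℤ)) (m:ℤ)}))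
      · intro a b hab
        exact Subtype.ext (by simpa using congrArg Subtype.val hab)
      · intro c _; exact abs_nonneg _
      · intro b; exact le_rfl
      · exact hKsum.subtype _
      · exact hKsum.subtype _
    have step3 : tail m ≤ tail (i₂ - 1) + tail (n - i₂) := by
      rcases min_choice (i₂ - 1) (n - i₂) with h | h
      · rw [hm, h]; exact le_add_of_nonneg_right (tail_nonneg _)
      · rw [hm, h]; exact le_add_of_nonneg_left (tail_nonneg _)
    exact le_trans (le_trans step1 step2) step3
  -- main bound
  have reindex1 : ∀ n : ℕ, ∑ i₂ ∈ Finset.Icc 1 n, tail (i₂ - 1) = ∑ m ∈ Finset.range n, tail m := by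
    intro n
    refine Finset.sum_nbij' (fun i₂ => i₂ - 1) (fun m => m + 1) ?_ ?_ ?_ ?_ ?_ <;>
      intro a ha <;> simp only [Finset.mem_Icc, Finset.mem_range] at * <;> omega
  have reindex2 : ∀ n : ℕ, ∑ i₂ ∈ Finset.Icc 1 n, tail (n - i₂) = ∑ m ∈ Finset.range n, tail m := by
    intro n
    refine Finset.sum_nbij' (fun i₂ => n - i₂) (fun m => n - m) ?_ ?_ ?_ ?_ ?_ <;>
      intro a ha <;> simp only [Finset.mem_Icc, Finset.mem_range] at * <;>
      first
        | omega
        | (congr 1; omega)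
  have main_bound : ∀ n : ℕ, 1 ≤ n →
      |(1 / (n : ℝ)) * (∑ i₁ ∈ Finset.Icc 1 n, ∑ i₂ ∈ Finset.Icc 1 n,
          l1 ^ ((i₁ : ℤ) - (i₂ : ℤ) + s1).natAbs * l2 ^ ((i₂ : ℤ) - (i₁ : ℤ) + s2).natAbs) - T|
        ≤ 2 * ((n:ℝ)⁻¹ * ∑ m ∈ Finset.range n, tail m) := by
    intro n hn
    have hnpos : (0:ℝ) < n := by exact_mod_cast hn
    rw [Finset.sum_comm]
    rw [Finset.sum_congr rfl
      (fun i₂ hi₂ => row_eq n i₂ (Finset.mem_Icc.mp hi₂).1 (Finset.mem_Icc.mp hi₂).2)]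
    have expand : (1/(n:ℝ)) * (∑ i₂ ∈ Finset.Icc 1 n,
          ∑ j ∈ Finset.Icc (1 - (i₂:ℤ)) ((n:ℤ) - i₂), F j) - T
        = (1/(n:ℝ)) * ∑ i₂ ∈ Finset.Icc 1 n,
            ((∑ j ∈ Finset.Icc (1 - (i₂:ℤ)) ((n:ℤ) - i₂), F j) - T) := by
      rw [Finset.sum_sub_distrib, Finset.sum_const, Nat.card_Icc, Nat.add_sub_cancel,
        nsmul_eq_mul, mul_sub]
      field_simp
    rw [expand]
    calc |(1/(n:ℝ)) * ∑ i₂ ∈ Finset.Icc 1 n,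
            ((∑ j ∈ Finset.Icc (1 - (i₂:ℤ)) ((n:ℤ) - i₂), F j) - T)|
        ≤ (1/(n:ℝ)) * ∑ i₂ ∈ Finset.Icc 1 n,
            |(∑ j ∈ Finset.Icc (1 - (i₂:ℤ)) ((n:ℤ) - i₂), F j) - T| := by
          rw [abs_mul, abs_of_nonneg (by positivity : (0:ℝ) ≤ 1/(n:ℝ))]
          exact mul_le_mul_of_nonneg_left (Finset.abs_sum_le_sum_abs _ _) (by positivity)
      _ ≤ (1/(n:ℝ)) * ∑ i₂ ∈ Finset.Icc 1 n, (tail (i₂ - 1) + tail (n - i₂)) := by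
          apply mul_le_mul_of_nonneg_left _ (by positivity)
          apply Finset.sum_le_sum
          intro i hi
          obtain ⟨ha, hb⟩ := Finset.mem_Icc.mp hi
          exact row_bound n i ha hb
      _ = 2 * ((n:ℝ)⁻¹ * ∑ m ∈ Finset.range n, tail m) := by
          rw [Finset.sum_add_distrib, reindex1, reindex2]; ring
  -- squeeze
  have hb : Tendsto (fun n : ℕ => 2 * ((n:ℝ)⁻¹ * ∑ m ∈ Finset.range n, tail m))
      atTop (nhds 0) := by
    have := (tail_tendsto.cesaro).const_mul 2
    simpa using this
  rw [show nhds T = nhds T from rfl]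
  have hzero : Tendsto (fun n : ℕ => ((1 / (n : ℝ)) *
      ∑ i₁ ∈ Finset.Icc 1 n, ∑ i₂ ∈ Finset.Icc 1 n,
        l1 ^ ((i₁ : ℤ) - (i₂ : ℤ) + s1).natAbs * l2 ^ ((i₂ : ℤ) - (i₁ : ℤ) + s2).natAbs) - T)
      atTop (nhds 0) := by
    apply squeeze_zero_norm' _ hb
    filter_upwards [eventually_ge_atTop 1] with n hn
    rw [Real.norm_eq_abs]
    exact main_bound n hn
  simpa using hzero.add_const T

set_option maxHeartbeats 1000000 in
private lemma aux_tsum_value (l1 l2 : ℝ) (h1 : |l1| < 1) (h2 : |l2| < 1) (hne : l1 ≠ l2)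
    (s1 s2 : ℤ) (S : ℕ) (hS : (S : ℤ) = |s1 + s2|) :
    ∑' k : ℤ, l1 ^ (k + s1).natAbs * l2 ^ (s2 - k).natAbs
      = l1 ^ (S + 1) * (1 - l2 ^ 2) / ((l1 - l2) * (1 - l1 * l2)) +
        l2 ^ (S + 1) * (1 - l1 ^ 2) / ((l2 - l1) * (1 - l2 * l1)) := by
  have hll : |l1 * l2| < 1 := by
    rw [abs_mul]
    calc |l1| * |l2| ≤ |l1| * 1 := by
          exact mul_le_mul_of_nonneg_left (le_of_lt h2) (abs_nonneg _)
      _ = |l1| := mul_one _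
      _ < 1 := h1
  have hden : (1 : ℝ) - l1 * l2 ≠ 0 := by
    intro h
    have : l1 * l2 = 1 := by linarith
    rw [this] at hll; simp at hll
  have hsub : l1 - l2 ≠ 0 := sub_ne_zero.mpr hne
  -- step 1 : shift
  have h0 : (∑' k : ℤ, l1 ^ (k + s1).natAbs * l2 ^ (s2 - k).natAbs)
      = ∑' j : ℤ, l1 ^ j.natAbs * l2 ^ ((s1 + s2) - j).natAbs := by
    rw [← (Equiv.subRight s1).tsum_eq (fun k : ℤ => l1 ^ (k + s1).natAbs * l2 ^ (s2 - k).natAbs)]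
    apply tsum_congr; intro j
    simp only [Equiv.subRight_apply]
    rw [show j - s1 + s1 = j by ring, show s2 - (j - s1) = (s1 + s2) - j by ring]
  -- step 2 : reduce to S
  have h2' : (∑' k : ℤ, l1 ^ (k + s1).natAbs * l2 ^ (s2 - k).natAbs)
      = ∑' j : ℤ, l1 ^ j.natAbs * l2 ^ (((S:ℤ)) - j).natAbs := by
    rcases le_or_gt 0 (s1 + s2) with hd | hd
    · rw [abs_of_nonneg hd] at hS
      rw [h0, hS]
    · rw [abs_of_neg hd] at hS
      rw [h0, ← (Equiv.neg ℤ).tsum_eq (fun j : ℤ => l1 ^ j.natAbs * l2 ^ ((s1 + s2) - j).natAbs)]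
      apply tsum_congr; intro j
      simp only [Equiv.neg_apply]
      have a1 : (-j).natAbs = j.natAbs := Int.natAbs_neg j
      have a2 : ((s1 + s2) - (-j)).natAbs = ((S:ℤ) - j).natAbs := by omega
      rw [a1, a2]
  rw [h2']
  -- summability
  have hT2sum : Summable (fun k : ℤ => l1 ^ k.natAbs * l2 ^ (((S:ℤ)) - k).natAbs) := by
    have := (aux_summable_abs' l1 l2 h1 h2 0 (S:ℤ)).of_abs
    simpa using this
  have hf₁ : Summable (fun n : ℕ => l1 ^ ((n:ℤ)).natAbs * l2 ^ (((S:ℤ)) - n).natAbs) := by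
    have := hT2sum.comp_injective (Nat.cast_injective : Function.Injective (fun n : ℕ => (n:ℤ)))
    simpa [Function.comp_def] using this
  have hf₂ : Summable (fun n : ℕ => l1 ^ ((-(n+1):ℤ)).natAbs * l2 ^ (((S:ℤ)) - (-(n+1))).natAbs) := by
    have hinj2 : Function.Injective (fun n : ℕ => (-(n+1) : ℤ)) := by
      intro a b h
      simp only at h
      omega
    have := hT2sum.comp_injective hinj2
    simpa [Function.comp_def] using this
  have key := tsum_of_nat_of_neg_add_one
    (f := fun k : ℤ => l1 ^ k.natAbs * l2 ^ (((S:ℤ)) - k).natAbs) hf₁ hf₂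
  rw [key]
  -- the negative piece
  have neg_piece : (∑' n : ℕ, l1 ^ ((-(n+1):ℤ)).natAbs * l2 ^ (((S:ℤ)) - (-(n+1))).natAbs)
      = l1 * l2 ^ (S+1) * (1 - l1 * l2)⁻¹ := by
    have congr1 : ∀ n : ℕ, l1 ^ ((-(n+1):ℤ)).natAbs * l2 ^ (((S:ℤ)) - (-(n+1))).natAbs
        = (l1 * l2) ^ n * (l1 * l2 ^ (S+1)) := by
      intro n
      have e1 : ((-(n+1):ℤ)).natAbs = n + 1 := by omega
      have e2 : (((S:ℤ)) - (-(n+1))).natAbs = S + (n + 1) := by omega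
      rw [e1, e2]
      ring
    rw [tsum_congr congr1, tsum_mul_right, tsum_geometric_of_norm_lt_one (by rwa [Real.norm_eq_abs])]
    ring
  -- the nat piece
  have nat_piece : (∑' n : ℕ, l1 ^ ((n:ℤ)).natAbs * l2 ^ (((S:ℤ)) - n).natAbs)
      = (l1 ^ (S+1) - l2 ^ (S+1)) / (l1 - l2) + l1 ^ (S+1) * l2 * (1 - l1 * l2)⁻¹ := by
    rw [← hf₁.sum_add_tsum_nat_add (S+1)]
    congr 1
    · -- finite geometric part
      have congr2 : ∀ i ∈ Finset.range (S+1),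
          l1 ^ ((i:ℤ)).natAbs * l2 ^ (((S:ℤ)) - i).natAbs = l1 ^ i * l2 ^ (S + 1 - 1 - i) := by
        intro i hi
        simp only [Finset.mem_range] at hi
        have e1 : ((i:ℤ)).natAbs = i := by omega
        have e2 : (((S:ℤ)) - i).natAbs = S + 1 - 1 - i := by omega
        rw [e1, e2]
      rw [Finset.sum_congr rfl congr2]
      rw [eq_div_iff hsub]
      exact geom_sum₂_mul l1 l2 (S+1)
    · -- tail part
      have congr3 : ∀ n : ℕ, l1 ^ (((n + (S+1) : ℕ) : ℤ)).natAbs * l2 ^ (((S:ℤ)) - (n + (S+1) : ℕ)).natAbs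
          = (l1 * l2) ^ n * (l1 ^ (S+1) * l2) := by
        intro n
        have e1 : (((n + (S+1) : ℕ) : ℤ)).natAbs = n + (S + 1) := by omega
        have e2 : (((S:ℤ)) - (n + (S+1) : ℕ)).natAbs = n + 1 := by omega
        rw [e1, e2]
        ring
      rw [tsum_congr congr3, tsum_mul_right, tsum_geometric_of_norm_lt_one (by rwa [Real.norm_eq_abs])]
      ring
  rw [nat_piece, neg_piece]
  have hsub' : l2 - l1 ≠ 0 := sub_ne_zero.mpr (Ne.symm hne)
  have hden' : (1 : ℝ) - l2 * l1 ≠ 0 := by rw [mul_comm]; exact hden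
  field_simp
  ring

theorem stmt_5 (l1 l2 : ℝ) (h1 : |l1| < 1) (h2 : |l2| < 1) (hne : l1 ≠ l2)
    (s1 s2 : ℤ) (S : ℕ) (hS : (S : ℤ) = |s1 + s2|) :
    Filter.Tendsto
      (fun n : ℕ => (1 / (n : ℝ)) *
        ∑ i₁ ∈ Finset.Icc 1 n, ∑ i₂ ∈ Finset.Icc 1 n,
          l1 ^ ((i₁ : ℤ) - (i₂ : ℤ) + s1).natAbs * l2 ^ ((i₂ : ℤ) - (i₁ : ℤ) + s2).natAbs)
      Filter.atTop
      (nhds (l1 ^ (S + 1) * (1 - l2 ^ 2) / ((l1 - l2) * (1 - l1 * l2)) +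
        l2 ^ (S + 1) * (1 - l1 ^ 2) / ((l2 - l1) * (1 - l2 * l1)))) := by
  have hconv := aux_conv l1 l2 h1 h2 s1 s2
  rwa [aux_tsum_value l1 l2 h1 h2 hne s1 s2 S hS] at hconv
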